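/- Let B̄_{m,n}(x) = 2^{-mn-n(n+1)/2} (x+m+1)_n · [(x+1)(x+2)^2···(x+m-1)^2(x+m)] · [(x+3/2)(x+5/2)^2···(x+(2m-3)/2)^2(x+(2m-1)/2)] · ∏_{i=1}^m (x+i)_n/(x+i+1/2)_n · ∏_{i=1}^n (2x+m+i+1)_{m+i}, and let B_{m,n}(x) be as in the paper's formula (1.1). Then for every n ≥ 1, B̄_{n,n}(x)/B_{n,n-1}(x) = (x+1)_{2n}, as an identity of rational functions in x. -/

import Mathlib

/-- The rising factorial `(a)_j = a(a+1)···(a+j-1)`. -/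
noncomputable def rfac {K : Type*} [Field K] (a : K) (j : ℕ) : K :=
  ∏ i ∈ Finset.range j, (a + i)

/-- The product `(x+2)(x+3)^2···(x+n-1)^2(x+n)`, whose bases grow by one from
factor to factor while the exponents increase by one up to the middle and then
decrease by one (empty for `n ≤ 1`). -/
noncomputable def tentInt {K : Type*} [Field K] (x : K) (n : ℕ) : K :=
  ∏ j ∈ Finset.Icc 2 n, (x + j) ^ (min (j - 1) (n + 1 - j))

/-- The product `(x+3/2)(x+5/2)^2···(x+(2n-1)/2)^2(x+(2n+1)/2)`, bases growing by
one, exponents rising by one to the middle and then falling (empty for `n = 0`). -/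
noncomputable def tentHalf {K : Type*} [Field K] (x : K) (n : ℕ) : K :=
  ∏ j ∈ Finset.Icc 1 n, (x + j + 1 / 2) ^ (min j (n + 1 - j))

/-- The product `(x+1)(x+2)^2···(x+m-1)^2(x+m)`, bases growing by one, exponents
rising by one to the middle and then falling (empty for `m = 0`). -/
noncomputable def tentIntBar {K : Type*} [Field K] (x : K) (m : ℕ) : K :=
  ∏ j ∈ Finset.Icc 1 m, (x + j) ^ (min j (m + 1 - j))

/-- The product `(x+3/2)(x+5/2)^2···(x+(2m-3)/2)^2(x+(2m-1)/2)`, bases growing by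
one, exponents rising by one to the middle and then falling (empty for `m ≤ 1`). -/
noncomputable def tentHalfBar {K : Type*} [Field K] (x : K) (m : ℕ) : K :=
  ∏ j ∈ Finset.Icc 1 (m - 1), (x + j + 1 / 2) ^ (min j (m - j))

/-- The polynomial `B_{m,n}(x)` of formula (1.1). -/
noncomputable def Bpoly {K : Type*} [Field K] (m n : ℕ) (x : K) : K :=
  ((2 : K) ^ (m * n + m * (m - 1) / 2))⁻¹ *
    rfac (x + n + 1) m * rfac (x + n + 2) m *
    tentInt x n * tentHalf x n *
    (∏ i ∈ Finset.Icc 1 n, rfac (x + i) m / rfac (x + i + 1 / 2) m) *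
    (∏ i ∈ Finset.Icc 1 m, rfac (2 * x + n + i + 2) (n + i - 1))

/-- The polynomial `B̄_{m,n}(x)` of formula (1.2). -/
noncomputable def Bbar {K : Type*} [Field K] (m n : ℕ) (x : K) : K :=
  ((2 : K) ^ (m * n + n * (n + 1) / 2))⁻¹ *
    rfac (x + m + 1) n *
    tentIntBar x m * tentHalfBar x m *
    (∏ i ∈ Finset.Icc 1 m, rfac (x + i) n / rfac (x + i + 1 / 2) n) *
    (∏ i ∈ Finset.Icc 1 n, rfac (2 * x + m + i + 1) (m + i))

/- ### Auxiliary lemmas -/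

instance : CharZero (RatFunc ℚ) :=
  charZero_of_injective_algebraMap (algebraMap ℚ (RatFunc ℚ)).injective

section Aux

lemma prod_Icc_one' {M : Type*} [CommMonoid M] (n : ℕ) (f : ℕ → M) :
    ∏ i ∈ Finset.Icc 1 n, f i = ∏ i ∈ Finset.range n, f (i + 1) := by
  rw [← Finset.Ico_add_one_right_eq_Icc, Finset.prod_Ico_eq_prod_range]
  have h : n + 1 - 1 = n := by omega
  rw [h]
  exact Finset.prod_congr rfl fun i _ => by rw [Nat.add_comm]

variable {K : Type*} [Field K]

lemma rfac_add (a : K) (m k : ℕ) : rfac a (m + k) = rfac a m * rfac (a + m) k := by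
  rw [rfac, rfac, rfac, Finset.prod_range_add]
  congr 1
  refine Finset.prod_congr rfl fun i _ => ?_
  push_cast; ring

lemma rfac_two (a : K) : rfac a 2 = a * (a + 1) := by
  simp [rfac, Finset.prod_range_succ]

lemma tentHalfBar_eq (x : K) (k : ℕ) : tentHalfBar x (k + 1) = tentHalf x k := by
  unfold tentHalfBar tentHalf
  have h : k + 1 - 1 = k := by omega
  rw [h]

lemma tentIntBar_eq (x : K) (k : ℕ) :
    tentIntBar x (k + 1) = rfac (x + 1) (k + 1) * tentInt x k := by
  unfold tentIntBar tentInt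
  have h1 : ∀ j ∈ Finset.Icc 1 (k + 1),
      (x + j : K) ^ min j (k + 1 + 1 - j)
        = (x + j) * (x + j) ^ min (j - 1) (k + 1 - j) := by
    intro j hj
    simp only [Finset.mem_Icc] at hj
    have h : min j (k + 1 + 1 - j) = min (j - 1) (k + 1 - j) + 1 := by omega
    rw [h, pow_succ]; ring
  rw [Finset.prod_congr rfl h1, Finset.prod_mul_distrib]
  congr 1
  · rw [prod_Icc_one', rfac]
    exact Finset.prod_congr rfl fun i _ => by push_cast; ring
  · refine (Finset.prod_subset ?_ ?_).symm
    · intro j hj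
      simp only [Finset.mem_Icc] at hj ⊢
      omega
    · intro j hj hj'
      simp only [Finset.mem_Icc] at hj hj'
      have h : min (j - 1) (k + 1 - j) = 0 := by omega
      rw [h, pow_zero]

set_option maxHeartbeats 1000000 in
/-- The key polynomial identity. -/
lemma key (x : K) (k : ℕ) (h2 : (2 : K) ≠ 0)
    (hv : rfac (x + k + 1 + 1 / 2) (k + 1) ≠ 0) :
    Bbar (k + 1) (k + 1) x = rfac (x + 1) (2 * (k + 1)) * Bpoly (k + 1) k x := by
  -- exponents of two
  have hA : (k+1)*(k+1) + (k+1)*((k+1)+1)/2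
      = ((k+1)*k + (k+1)*((k+1)-1)/2) + ((k+1)+(k+1)) := by
    have h1 : (k+1)*(k+1+1) = k*(k+1) + 2*(k+1) := by ring
    have h2' : (k+1)*(k+1) = k*(k+1) + (k+1) := by ring
    have h4 : (k+1)*((k+1)-1) = k*(k+1) := by
      have : (k+1)-1 = k := by omega
      rw [this]; ring
    have h3 : (k+1)*k = k*(k+1) := by ring
    obtain ⟨c, hc⟩ := Nat.even_mul_succ_self k
    rw [h2', h1, h4, h3, hc]
    omega
  -- split of (x+1)_{2(k+1)}
  have hsplit : rfac (x + 1) (2*(k+1))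
      = rfac (x + 1) (k+1) * rfac (x + k + 2) (k+1) := by
    rw [two_mul, rfac_add]
    congr 2
    push_cast; ring
  -- split the quotient product
  have hq : (∏ i ∈ Finset.Icc 1 (k+1), rfac (x + i) (k+1) / rfac (x + i + 1/2) (k+1))
      = (∏ i ∈ Finset.Icc 1 k, rfac (x + i) (k+1) / rfac (x + i + 1/2) (k+1))
        * (rfac (x + (k+1 : ℕ)) (k+1) / rfac (x + (k+1 : ℕ) + 1/2) (k+1)) :=
    Finset.prod_Icc_succ_top (by omega) _
  -- big product
  have hR : (∏ i ∈ Finset.Icc 1 (k+1), rfac (2*x + (k+1 : ℕ) + i + 1) ((k+1) + i))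
      = (∏ i ∈ Finset.Icc 1 (k+1), rfac (2*x + (k : ℕ) + i + 2) (k + i - 1))
        * ((2:K)^(k+1) * rfac (x + k + 1 + 1/2) (k+1))
        * ((2:K)^(k+1) * rfac (x + k + 2) (k+1)) := by
    have hterm : ∀ i ∈ Finset.Icc 1 (k+1),
        rfac (2*x + (k+1 : ℕ) + i + 1) ((k+1) + i)
          = rfac (2*x + (k : ℕ) + i + 2) (k + i - 1)
            * (2 * (x + (k : ℕ) + i + 1/2)) * (2 * (x + (k : ℕ) + i + 1)) := by
      intro i hi
      simp only [Finset.mem_Icc] at hi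
      have h1 : (k+1) + i = (k + i - 1) + 2 := by omega
      rw [h1, rfac_add, rfac_two]
      have hb : (2*x + ((k+1 : ℕ) : K) + i + 1) = 2*x + (k : K) + i + 2 := by
        push_cast; ring
      have hc : ((k + i - 1 : ℕ) : K) = (k : K) + i - 1 := by
        have h : (1:ℕ) ≤ k + i := by omega
        push_cast [Nat.cast_sub h]
        ring
      rw [hb, hc]
      field_simp
      ring
    rw [Finset.prod_congr rfl hterm]
    simp only [Finset.prod_mul_distrib, Finset.prod_const]
    have hcard : (Finset.Icc 1 (k+1)).card = k + 1 := by
      rw [Nat.card_Icc]; omega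
    have hc1 : (∏ i ∈ Finset.Icc 1 (k+1), (x + (k : K) + i + 1/2))
        = rfac (x + k + 1 + 1/2) (k+1) := by
      rw [prod_Icc_one', rfac]
      exact Finset.prod_congr rfl fun i _ => by push_cast; ring
    have hc2 : (∏ i ∈ Finset.Icc 1 (k+1), (x + (k : K) + i + 1))
        = rfac (x + k + 2) (k+1) := by
      rw [prod_Icc_one', rfac]
      exact Finset.prod_congr rfl fun i _ => by push_cast; ring
    rw [hcard, hc1, hc2]
    try ring
  -- normalizations of casts
  have c0 : ((k + 1 - 1 : ℕ) : K) = (k : K) := by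
    have : k + 1 - 1 = k := by omega
    rw [this]
  have c1 : (x + ((k+1 : ℕ) : K)) = x + (k : K) + 1 := by push_cast; ring
  have c2 : (x + ((k+1 : ℕ) : K) + 1) = x + (k : K) + 2 := by push_cast; ring
  have c3 : (x + ((k+1 : ℕ) : K) + 1/2) = x + (k : K) + 1 + 1/2 := by push_cast; ring
  rw [Bbar, Bpoly, tentIntBar_eq, tentHalfBar_eq, hq, hR, hsplit, hA, c1]
  have c2' : (x + (k : K) + 1 + 1) = x + (k : K) + 2 := by ring
  rw [c2']
  have hkm : k + 1 - 1 = k := by omega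
  rw [hkm]
  have hu : ((2:K)^(k+1)) ≠ 0 := pow_ne_zero _ h2
  have e1 : ((2:K) ^ ((k+1)*k + (k+1)*k/2 + ((k+1)+(k+1))))⁻¹
      = ((2:K) ^ ((k+1)*k + (k+1)*k/2))⁻¹ * ((2:K)^(k+1))⁻¹ * ((2:K)^(k+1))⁻¹ := by
    rw [pow_add, pow_add (2:K) (k+1) (k+1), mul_inv, mul_inv, ← mul_assoc]
  rw [e1, div_eq_mul_inv (rfac (x + (k:K) + 1) (k+1)) (rfac (x + (k:K) + 1 + 1/2) (k+1))]
  have ha : rfac (x + (k:K) + 1 + 1/2) (k+1) * (rfac (x + (k:K) + 1 + 1/2) (k+1))⁻¹ = 1 :=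
    mul_inv_cancel₀ hv
  have hb : (2:K)^(k+1) * ((2:K)^(k+1))⁻¹ = 1 := mul_inv_cancel₀ hu
  linear_combination
    ((((2:K) ^ ((k+1)*k + (k+1)*k/2))⁻¹ * rfac (x + (k:K) + 2) (k+1) *
        rfac (x + 1) (k+1) * tentInt x k * tentHalf x k *
        (∏ i ∈ Finset.Icc 1 k, rfac (x + i) (k+1) / rfac (x + i + 1/2) (k+1)) *
        rfac (x + (k:K) + 1) (k+1) *
        (∏ i ∈ Finset.Icc 1 (k+1), rfac (2*x + (k:K) + i + 2) (k + i - 1)) *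
        rfac (x + (k:K) + 2) (k+1)) *
      ((2:K)^(k+1) * ((2:K)^(k+1))⁻¹)^2) * ha +
    ((((2:K) ^ ((k+1)*k + (k+1)*k/2))⁻¹ * rfac (x + (k:K) + 2) (k+1) *
        rfac (x + 1) (k+1) * tentInt x k * tentHalf x k *
        (∏ i ∈ Finset.Icc 1 k, rfac (x + i) (k+1) / rfac (x + i + 1/2) (k+1)) *
        rfac (x + (k:K) + 1) (k+1) *
        (∏ i ∈ Finset.Icc 1 (k+1), rfac (2*x + (k:K) + i + 2) (k + i - 1)) *
        rfac (x + (k:K) + 2) (k+1)) *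
      ((2:K)^(k+1) * ((2:K)^(k+1))⁻¹ + 1)) * hb

end Aux

section NeZero

lemma Xq_ne (c : ℚ) : (RatFunc.X : RatFunc ℚ) + (c : RatFunc ℚ) ≠ 0 := by
  have h : (RatFunc.X : RatFunc ℚ) + (c : RatFunc ℚ)
      = algebraMap (Polynomial ℚ) (RatFunc ℚ) (Polynomial.X + Polynomial.C c) := by
    rw [map_add, RatFunc.algebraMap_X, RatFunc.algebraMap_C,
      eq_ratCast (RatFunc.C : ℚ →+* RatFunc ℚ)]
  rw [h]
  exact RatFunc.algebraMap_ne_zero (Polynomial.X_add_C_ne_zero c)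

lemma X2q_ne (c : ℚ) : 2 * (RatFunc.X : RatFunc ℚ) + (c : RatFunc ℚ) ≠ 0 := by
  have h : 2 * (RatFunc.X : RatFunc ℚ) + (c : RatFunc ℚ)
      = 2 * (RatFunc.X + ((c / 2 : ℚ) : RatFunc ℚ)) := by
    push_cast; ring
  rw [h]
  exact mul_ne_zero two_ne_zero (Xq_ne _)

lemma rfacXq_ne (c : ℚ) (m : ℕ) : rfac ((RatFunc.X : RatFunc ℚ) + (c : RatFunc ℚ)) m ≠ 0 := by
  rw [rfac, Finset.prod_ne_zero_iff]
  intro i _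
  have h : (RatFunc.X : RatFunc ℚ) + (c : RatFunc ℚ) + (i : RatFunc ℚ)
      = RatFunc.X + ((c + i : ℚ) : RatFunc ℚ) := by push_cast; ring
  rw [h]
  exact Xq_ne _

lemma rfacX2q_ne (c : ℚ) (m : ℕ) :
    rfac (2 * (RatFunc.X : RatFunc ℚ) + (c : RatFunc ℚ)) m ≠ 0 := by
  rw [rfac, Finset.prod_ne_zero_iff]
  intro i _
  have h : 2 * (RatFunc.X : RatFunc ℚ) + (c : RatFunc ℚ) + (i : RatFunc ℚ)
      = 2 * RatFunc.X + ((c + i : ℚ) : RatFunc ℚ) := by push_cast; ring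
  rw [h]
  exact X2q_ne _

lemma Bpoly_ne (k : ℕ) : Bpoly (k + 1) k (RatFunc.X : RatFunc ℚ) ≠ 0 := by
  rw [Bpoly]
  refine mul_ne_zero (mul_ne_zero (mul_ne_zero (mul_ne_zero (mul_ne_zero (mul_ne_zero
    ?_ ?_) ?_) ?_) ?_) ?_) ?_
  · exact inv_ne_zero (pow_ne_zero _ two_ne_zero)
  · have h : (RatFunc.X : RatFunc ℚ) + (k : RatFunc ℚ) + 1
        = RatFunc.X + ((k + 1 : ℚ) : RatFunc ℚ) := by push_cast; ring
    rw [h]; exact rfacXq_ne _ _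
  · have h : (RatFunc.X : RatFunc ℚ) + (k : RatFunc ℚ) + 2
        = RatFunc.X + ((k + 2 : ℚ) : RatFunc ℚ) := by push_cast; ring
    rw [h]; exact rfacXq_ne _ _
  · rw [tentInt, Finset.prod_ne_zero_iff]
    intro j _
    refine pow_ne_zero _ ?_
    have h : (RatFunc.X : RatFunc ℚ) + (j : RatFunc ℚ)
        = RatFunc.X + ((j : ℚ) : RatFunc ℚ) := by push_cast; ring
    rw [h]; exact Xq_ne _
  · rw [tentHalf, Finset.prod_ne_zero_iff]
    intro j _
    refine pow_ne_zero _ ?_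
    have h : (RatFunc.X : RatFunc ℚ) + (j : RatFunc ℚ) + 1/2
        = RatFunc.X + ((j + 1/2 : ℚ) : RatFunc ℚ) := by push_cast; ring
    rw [h]; exact Xq_ne _
  · rw [Finset.prod_ne_zero_iff]
    intro i _
    refine div_ne_zero ?_ ?_
    · have h : (RatFunc.X : RatFunc ℚ) + (i : RatFunc ℚ)
          = RatFunc.X + ((i : ℚ) : RatFunc ℚ) := by push_cast; ring
      rw [h]; exact rfacXq_ne _ _
    · have h : (RatFunc.X : RatFunc ℚ) + (i : RatFunc ℚ) + 1/2
          = RatFunc.X + ((i + 1/2 : ℚ) : RatFunc ℚ) := by push_cast; ring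
      rw [h]; exact rfacXq_ne _ _
  · rw [Finset.prod_ne_zero_iff]
    intro i _
    have h : 2 * (RatFunc.X : RatFunc ℚ) + (k : RatFunc ℚ) + (i : RatFunc ℚ) + 2
        = 2 * RatFunc.X + ((k + i + 2 : ℚ) : RatFunc ℚ) := by push_cast; ring
    rw [h]; exact rfacX2q_ne _ _

end NeZero

/-- Identity (5.11): for `n ≥ 1`, `B̄_{n,n}(x)/B_{n,n-1}(x) = (x+1)_{2n}`,
as rational functions in `x`. -/
theorem Bbar_div_B (n : ℕ) (hn : 1 ≤ n) :
    Bbar n n (RatFunc.X : RatFunc ℚ) / Bpoly n (n - 1) (RatFunc.X : RatFunc ℚ) =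
      rfac ((RatFunc.X : RatFunc ℚ) + 1) (2 * n) := by
  obtain ⟨k, rfl⟩ : ∃ k, n = k + 1 := ⟨n - 1, by omega⟩
  have hkm : k + 1 - 1 = k := by omega
  rw [hkm, div_eq_iff (Bpoly_ne k)]
  have hv : rfac ((RatFunc.X : RatFunc ℚ) + k + 1 + 1/2) (k + 1) ≠ 0 := by
    have h : (RatFunc.X : RatFunc ℚ) + (k : RatFunc ℚ) + 1 + 1/2
        = RatFunc.X + ((k + 1 + 1/2 : ℚ) : RatFunc ℚ) := by push_cast; ring
    rw [h]; exact rfacXq_ne _ _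
  exact key RatFunc.X k two_ne_zero hv
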